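/- arXiv:1407.5206 — 3 statements merged into one kernel-verified Lean document; each statement's English description precedes it below -/
import Mathlib

section
/- Let R be a ring, M an R-module with endomorphism ring Γ = End(M)^op. If there is an exact sequence M'' → M' → N → 0 with M', M'' ∈ add M which remains exact after applying Hom(M,-), then the counit μ_N : M ⊗_Γ Hom(M,N) → N is an isomorphism. -/
open TensorProduct LinearMap

section StaticDefs
variable (R : Type) [Ring R] (M : Type) [AddCommGroup M] [Module R M]
variable (N : Type) [AddCommGroup N] [Module R N]

/-- The evaluation map `M ⊗[ℤ] Hom_R(M,N) → N`. -/
noncomputable def evalTensor : (M ⊗[ℤ] (M →ₗ[R] N)) →ₗ[ℤ] N :=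
  TensorProduct.lift (LinearMap.mk₂ ℤ (fun m f => f m)
    (fun m m' f => by simp) (fun z m f => by simp)
    (fun m f g => rfl) (fun z m f => rfl))

/-- The subgroup of relations defining `M ⊗_{End(M)ᵒᵖ} Hom(M,N)` as a quotient
of `M ⊗[ℤ] Hom(M,N)`. -/
noncomputable def staticRel : AddSubgroup (M ⊗[ℤ] (M →ₗ[R] N)) :=
  AddSubgroup.closure {x | ∃ (e : M →ₗ[R] M) (m : M) (f : M →ₗ[R] N),
    x = e m ⊗ₜ[ℤ] f - m ⊗ₜ[ℤ] (f ∘ₗ e)}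

/-- `N` is `M`-static: the canonical map `μ_N : M ⊗_{End(M)ᵒᵖ} Hom(M,N) → N`
is an isomorphism; equivalently (since the relations are contained in the kernel of
evaluation), the evaluation map is surjective and its kernel consists of relations. -/
def IsStatic : Prop :=
  Function.Surjective (evalTensor R M N) ∧
    ∀ x, evalTensor R M N x = 0 → x ∈ staticRel R M N

/-- `M'` belongs to `add M`: it is a direct summand of a finite direct sum of copies of `M`. -/
def InAdd (M' : Type) [AddCommGroup M'] [Module R M'] : Prop :=
  ∃ (n : ℕ) (i : M' →ₗ[R] (Fin n → M)) (p : (Fin n → M) →ₗ[R] M'),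
    p ∘ₗ i = LinearMap.id

/-- `N` is generated by `M`: an epimorphic image of a finite direct sum of copies of `M`. -/
def GeneratedBy : Prop :=
  ∃ (n : ℕ) (g : (Fin n → M) →ₗ[R] N), Function.Surjective g

end StaticDefs

section Aux
variable (R : Type) [Ring R] (M : Type) [AddCommGroup M] [Module R M]
variable {A B : Type} [AddCommGroup A] [Module R A] [AddCommGroup B] [Module R B]

/-- Pushforward of the tensor along postcomposition with `g`. -/
noncomputable def pushT (g : A →ₗ[R] B) :
    M ⊗[ℤ] (M →ₗ[R] A) →ₗ[ℤ] M ⊗[ℤ] (M →ₗ[R] B) :=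
  LinearMap.lTensor M (AddMonoidHom.mk' (fun h => g ∘ₗ h)
    (fun h₁ h₂ => by ext x; simp)).toIntLinearMap

@[simp] lemma pushT_tmul (g : A →ₗ[R] B) (m : M) (h : M →ₗ[R] A) :
    pushT R M g (m ⊗ₜ[ℤ] h) = m ⊗ₜ[ℤ] (g ∘ₗ h) := rfl

@[simp] lemma evalTensor_tmul (m : M) (h : M →ₗ[R] A) :
    evalTensor R M A (m ⊗ₜ[ℤ] h) = h m := rfl

lemma eval_pushT (g : A →ₗ[R] B) (t : M ⊗[ℤ] (M →ₗ[R] A)) :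
    evalTensor R M B (pushT R M g t) = g (evalTensor R M A t) := by
  induction t using TensorProduct.induction_on with
  | zero => simp
  | tmul m h => simp
  | add x y hx hy => simp [map_add, hx, hy]

lemma pushT_sum {ι : Type*} (s : Finset ι) (g : ι → (A →ₗ[R] B))
    (t : M ⊗[ℤ] (M →ₗ[R] A)) :
    pushT R M (∑ j ∈ s, g j) t = ∑ j ∈ s, pushT R M (g j) t := by
  induction t using TensorProduct.induction_on with
  | zero => simp
  | tmul m h =>
      simp only [pushT_tmul]
      rw [show (∑ j ∈ s, g j) ∘ₗ h = ∑ j ∈ s, (g j ∘ₗ h) by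
        ext x; simp [LinearMap.sum_apply]]
      exact TensorProduct.tmul_sum m _ _ |>.trans rfl
  | add x y hx hy => simp [map_add, hx, hy, Finset.sum_add_distrib]

lemma pushT_comp (g₂ : A →ₗ[R] B) {C : Type} [AddCommGroup C] [Module R C]
    (g₁ : C →ₗ[R] A) (t : M ⊗[ℤ] (M →ₗ[R] C)) :
    pushT R M (g₂ ∘ₗ g₁) t = pushT R M g₂ (pushT R M g₁ t) := by
  induction t using TensorProduct.induction_on with
  | zero => simp
  | tmul m h => simp [LinearMap.comp_assoc]
  | add x y hx hy => simp [map_add, hx, hy]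

lemma pushT_id (t : M ⊗[ℤ] (M →ₗ[R] A)) :
    pushT R M (LinearMap.id : A →ₗ[R] A) t = t := by
  induction t using TensorProduct.induction_on with
  | zero => simp
  | tmul m h => simp
  | add x y hx hy => simp [map_add, hx, hy]

lemma pushT_rel (g : A →ₗ[R] B) {t : M ⊗[ℤ] (M →ₗ[R] A)}
    (ht : t ∈ staticRel R M A) : pushT R M g t ∈ staticRel R M B := by
  have hle : staticRel R M A ≤
      (staticRel R M B).comap (pushT R M g).toAddMonoidHom := by
    rw [staticRel, AddSubgroup.closure_le]
    rintro x ⟨e, m, h, rfl⟩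
    simp only [SetLike.mem_coe, AddSubgroup.mem_comap, LinearMap.toAddMonoidHom_coe,
      map_sub, pushT_tmul]
    rw [show g ∘ₗ (h ∘ₗ e) = (g ∘ₗ h) ∘ₗ e from (LinearMap.comp_assoc _ _ _).symm]
    exact AddSubgroup.subset_closure ⟨e, m, g ∘ₗ h, rfl⟩
  exact hle ht

lemma sub_mem_staticRel_self (t : M ⊗[ℤ] (M →ₗ[R] M)) :
    t - (evalTensor R M M t) ⊗ₜ[ℤ] (LinearMap.id : M →ₗ[R] M) ∈ staticRel R M M := by
  induction t using TensorProduct.induction_on with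
  | zero => simpa using zero_mem (staticRel R M M)
  | tmul m e =>
      have : m ⊗ₜ[ℤ] e - (e m) ⊗ₜ[ℤ] (LinearMap.id : M →ₗ[R] M) =
          -((e m) ⊗ₜ[ℤ] (LinearMap.id : M →ₗ[R] M) - m ⊗ₜ[ℤ] (LinearMap.id ∘ₗ e)) := by
        rw [LinearMap.id_comp]; abel
      rw [evalTensor_tmul, this]
      exact neg_mem (AddSubgroup.subset_closure ⟨e, m, LinearMap.id, rfl⟩)
  | add x y hx hy =>
      have : x + y - (evalTensor R M M (x + y)) ⊗ₜ[ℤ] (LinearMap.id : M →ₗ[R] M) =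
          (x - (evalTensor R M M x) ⊗ₜ[ℤ] (LinearMap.id : M →ₗ[R] M)) +
          (y - (evalTensor R M M y) ⊗ₜ[ℤ] (LinearMap.id : M →ₗ[R] M)) := by
        rw [map_add, TensorProduct.add_tmul]; abel
      rw [this]
      exact add_mem hx hy

lemma mem_staticRel_of_inAdd (hA : InAdd R M A) (t : M ⊗[ℤ] (M →ₗ[R] A))
    (ht : evalTensor R M A t = 0) : t ∈ staticRel R M A := by
  obtain ⟨n, i, p, hpi⟩ := hA
  have hsum : (∑ j : Fin n, (p ∘ₗ LinearMap.single R (fun _ : Fin n => M) j) ∘ₗ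
      ((LinearMap.proj j : (Fin n → M) →ₗ[R] M) ∘ₗ i)) = (LinearMap.id : A →ₗ[R] A) := by
    ext a
    simp only [LinearMap.sum_apply, LinearMap.comp_apply, LinearMap.proj_apply,
      LinearMap.coe_single, LinearMap.id_coe, id_eq]
    rw [← map_sum, Finset.univ_sum_single]
    exact LinearMap.congr_fun hpi a
  have key : t = ∑ j : Fin n,
      pushT R M (p ∘ₗ LinearMap.single R (fun _ : Fin n => M) j)
        (pushT R M ((LinearMap.proj j : (Fin n → M) →ₗ[R] M) ∘ₗ i) t) := by
    conv_lhs => rw [← pushT_id R M t, ← hsum, pushT_sum]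
    exact Finset.sum_congr rfl fun j _ => pushT_comp R M _ _ t
  rw [key]
  refine sum_mem fun j _ => pushT_rel R M _ ?_
  set t₁ := pushT R M ((LinearMap.proj j : (Fin n → M) →ₗ[R] M) ∘ₗ i) t
  have h₁ : evalTensor R M M t₁ = 0 := by
    rw [eval_pushT, ht, map_zero]
  have := sub_mem_staticRel_self R M t₁
  rwa [h₁, TensorProduct.zero_tmul, sub_zero] at this

lemma pushT_surjective (g : A →ₗ[R] B)
    (hg : ∀ h : M →ₗ[R] B, ∃ h' : M →ₗ[R] A, g ∘ₗ h' = h) :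
    Function.Surjective (pushT R M g) := by
  rw [← LinearMap.range_eq_top, ← top_le_iff]
  refine le_of_eq_of_le (TensorProduct.span_tmul_eq_top ℤ M (M →ₗ[R] B)).symm ?_
  apply Submodule.span_le.mpr
  rintro x ⟨m, h, rfl⟩
  obtain ⟨h', rfl⟩ := hg h
  exact ⟨m ⊗ₜ[ℤ] h', rfl⟩

end Aux

/-- If there is an exact sequence `M'' → M' → N → 0` with
`M', M'' ∈ add M` which remains exact after applying `Hom(M,-)`, then `N` is `M`-static. -/
theorem static_of_hom_exact_presentation
    (R : Type) [Ring R] (M M'' M' N : Type)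
    [AddCommGroup M] [Module R M] [AddCommGroup M''] [Module R M'']
    [AddCommGroup M'] [Module R M'] [AddCommGroup N] [Module R N]
    (f : M'' →ₗ[R] M') (q : M' →ₗ[R] N)
    (hM'' : InAdd R M M'') (hM' : InAdd R M M')
    (hq : Function.Surjective q)
    (hex : LinearMap.range f = LinearMap.ker q)
    (hHomSurj : ∀ g : M →ₗ[R] N, ∃ g' : M →ₗ[R] M', q ∘ₗ g' = g)
    (hHomExact : ∀ g' : M →ₗ[R] M', q ∘ₗ g' = 0 →
      ∃ g'' : M →ₗ[R] M'', f ∘ₗ g'' = g') :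
    IsStatic R M N := by
  constructor
  · -- Surjectivity of the evaluation map
    intro n
    obtain ⟨m', rfl⟩ := hq n
    obtain ⟨k, i, p, hpi⟩ := hM'
    refine ⟨∑ j : Fin k, (i m' j) ⊗ₜ[ℤ]
      ((q ∘ₗ p) ∘ₗ LinearMap.single R (fun _ : Fin k => M) j), ?_⟩
    rw [map_sum]
    simp only [evalTensor_tmul, LinearMap.comp_apply, LinearMap.coe_single]
    rw [← map_sum, ← map_sum, Finset.univ_sum_single]
    rw [show p (i m') = m' from LinearMap.congr_fun hpi m']
  · -- Kernel consists of relations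
    intro x hx
    have hqf : ∀ m'' : M'', q (f m'') = 0 := fun m'' => by
      have : f m'' ∈ LinearMap.ker q := hex ▸ LinearMap.mem_range_self f m''
      exact this
    obtain ⟨y, rfl⟩ := pushT_surjective R M q hHomSurj x
    have hy0 : q (evalTensor R M M' y) = 0 := by
      rw [← eval_pushT]; exact hx
    obtain ⟨m'', hm''⟩ : evalTensor R M M' y ∈ LinearMap.range f := by
      rw [hex]; exact hy0
    obtain ⟨k, i'', p'', hpi''⟩ := hM''
    set w : M ⊗[ℤ] (M →ₗ[R] M') := ∑ j : Fin k, (i'' m'' j) ⊗ₜ[ℤ]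
      ((f ∘ₗ p'') ∘ₗ LinearMap.single R (fun _ : Fin k => M) j) with hw
    have hevalw : evalTensor R M M' w = evalTensor R M M' y := by
      rw [hw, map_sum]
      simp only [evalTensor_tmul, LinearMap.comp_apply, LinearMap.coe_single]
      rw [← map_sum, ← map_sum, Finset.univ_sum_single,
        show p'' (i'' m'') = m'' from LinearMap.congr_fun hpi'' m'', hm'']
    have hpushw : pushT R M q w = 0 := by
      rw [hw, map_sum]
      refine Finset.sum_eq_zero fun j _ => ?_
      rw [pushT_tmul]
      have : q ∘ₗ ((f ∘ₗ p'') ∘ₗ LinearMap.single R (fun _ : Fin k => M) j) = 0 := by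
        ext m; exact hqf _
      rw [this, TensorProduct.tmul_zero]
    have hkey : pushT R M q y = pushT R M q (y - w) := by
      rw [map_sub, hpushw, sub_zero]
    rw [hkey]
    refine pushT_rel R M q (mem_staticRel_of_inAdd R M hM' (y - w) ?_)
    rw [map_sub, hevalw, sub_self]
end

section
/- Let Λ be a finite-dimensional algebra and M an ab-projective Λ-module with Γ = End(M)^op. Then every finite-dimensional Γ-module X is M-adstatic: the unit ν_X : X → Hom(M, M ⊗_Γ X) is an isomorphism, i.e., adstat M = mod Γ(M). -/
open TensorProduct LinearMap

section AdstaticDefs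
variable (R : Type) [Ring R] (M : Type) [AddCommGroup M] [Module R M]

/-- The relations defining `M ⊗_{Γ(M)} X` as a quotient of `M ⊗[ℤ] X`,
where `Γ(M) = End_R(M)ᵒᵖ`. (The relation set is stable under the `R`-action
on the left tensor factor, so the `R`-span agrees with the additive closure.) -/
noncomputable def adRel (X : Type) [AddCommGroup X]
    [Module (Module.End R M)ᵐᵒᵖ X] : Submodule R (M ⊗[ℤ] X) :=
  Submodule.span R {y | ∃ (e : Module.End R M) (m : M) (x : X),
    y = e m ⊗ₜ[ℤ] x - m ⊗ₜ[ℤ] ((MulOpposite.op e) • x)}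

/-- `M ⊗_{Γ(M)} X`, realized as a quotient of `M ⊗[ℤ] X`, as an `R`-module. -/
noncomputable def TensorOver (X : Type) [AddCommGroup X]
    [Module (Module.End R M)ᵐᵒᵖ X] : Type :=
  (M ⊗[ℤ] X) ⧸ adRel R M X

noncomputable instance (X : Type) [AddCommGroup X] [Module (Module.End R M)ᵐᵒᵖ X] :
    AddCommGroup (TensorOver R M X) :=
  inferInstanceAs (AddCommGroup ((M ⊗[ℤ] X) ⧸ adRel R M X))

noncomputable instance (X : Type) [AddCommGroup X] [Module (Module.End R M)ᵐᵒᵖ X] :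
    Module R (TensorOver R M X) :=
  inferInstanceAs (Module R ((M ⊗[ℤ] X) ⧸ adRel R M X))

/-- The unit `ν_X : X → Hom_R(M, M ⊗_{Γ(M)} X)`, `x ↦ (m ↦ m ⊗ x)`. -/
noncomputable def adUnit (X : Type) [AddCommGroup X]
    [Module (Module.End R M)ᵐᵒᵖ X] (x : X) : M →ₗ[R] TensorOver R M X where
  toFun := fun m => Submodule.Quotient.mk (m ⊗ₜ[ℤ] x)
  map_add' := by
    intro m m'
    show Submodule.Quotient.mk ((m + m') ⊗ₜ[ℤ] x) = _
    rw [TensorProduct.add_tmul]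
    rfl
  map_smul' := by
    intro r m
    show Submodule.Quotient.mk ((r • m) ⊗ₜ[ℤ] x) = _
    rw [← TensorProduct.smul_tmul']
    rfl

/-- The induced `R`-linear map `M ⊗_{Γ(M)} X → M ⊗_{Γ(M)} Y` of a `Γ(M)`-linear map. -/
noncomputable def tensorOverMap (X Y : Type) [AddCommGroup X]
    [Module (Module.End R M)ᵐᵒᵖ X] [AddCommGroup Y] [Module (Module.End R M)ᵐᵒᵖ Y]
    (φ : X →ₗ[(Module.End R M)ᵐᵒᵖ] Y) :
    TensorOver R M X →ₗ[R] TensorOver R M Y :=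
  Submodule.mapQ (adRel R M X) (adRel R M Y)
    (TensorProduct.AlgebraTensorModule.map (LinearMap.id : M →ₗ[R] M)
      (φ.toAddMonoidHom.toIntLinearMap))
    (by
      refine Submodule.span_le.2 ?_
      rintro y ⟨e, m, x, rfl⟩
      simp only [SetLike.mem_coe, Submodule.mem_comap, map_sub,
        TensorProduct.AlgebraTensorModule.map_tmul, LinearMap.id_apply,
        AddMonoidHom.coe_toIntLinearMap, LinearMap.toAddMonoidHom_coe]
      have : φ ((MulOpposite.op e) • x) = (MulOpposite.op e) • φ x := map_smul φ _ _
      rw [this]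
      exact Submodule.subset_span ⟨e, m, φ x, rfl⟩)

end AdstaticDefs


open CategoryTheory Limits

instance (priority := 100) abelian_hasFiniteBiproducts {C : Type*} [CategoryTheory.Category C] [CategoryTheory.Abelian C] :
    CategoryTheory.Limits.HasFiniteBiproducts C :=
  CategoryTheory.Limits.HasFiniteBiproducts.of_hasFiniteProducts

section CatDefs
variable {C : Type*} [Category C] [Abelian C]

/-- `X` belongs to `add M`: it is a retract of a finite direct sum of copies of `M`. -/
def CatInAdd (M X : C) : Prop :=
  ∃ (n : ℕ) (s : X ⟶ ⨁ (fun _ : Fin n => M)) (r : (⨁ (fun _ : Fin n => M)) ⟶ X),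
    s ≫ r = 𝟙 X

/-- A (strictly full) exact abelian subcategory of an abelian category:
a class of objects closed under isomorphisms, containing the zero objects and
closed under kernels, cokernels and finite direct sums. -/
structure IsExactAbelianSub (P : C → Prop) : Prop where
  iso : ∀ {X Y : C}, (X ≅ Y) → P X → P Y
  zero : ∀ Z : C, IsZero Z → P Z
  ker : ∀ {X Y : C} (f : X ⟶ Y), P X → P Y → P (kernel f)
  coker : ∀ {X Y : C} (f : X ⟶ Y), P X → P Y → P (cokernel f)
  sum : ∀ {X Y : C}, P X → P Y → P (X ⊞ Y)

/-- `ab M`: the smallest exact abelian subcategory containing `M`. -/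
def abSub (M : C) (X : C) : Prop :=
  ∀ P : C → Prop, IsExactAbelianSub P → P M → P X

/-- `G` is a projective object relative to the subcategory `P`. -/
def ProjIn (P : C → Prop) (G : C) : Prop :=
  P G ∧ ∀ (X Y : C), P X → P Y → ∀ (e : X ⟶ Y), Epi e →
    ∀ f : G ⟶ Y, ∃ g : G ⟶ X, g ≫ e = f

/-- `M` is ab-projective: projective as an object of `ab M`. -/
def AbProjective (M : C) : Prop := ProjIn (abSub M) M

/-- relative simple objects of the subcategory `P`. -/
def RelSimple (P : C → Prop) (X : C) : Prop :=
  P X ∧ ¬ IsZero X ∧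
    ∀ (Y : C) (i : Y ⟶ X), Mono i → P Y → IsZero Y ∨ IsIso i

/-- `X` has a filtration of length `n` inside the subcategory `P` whose
consecutive quotients satisfy `Q`. -/
def HasFiltration (P Q : C → Prop) (X : C) (n : ℕ) : Prop :=
  ∃ (F : Fin (n+1) → C) (g : ∀ i : Fin n, F i.castSucc ⟶ F i.succ),
    IsZero (F 0) ∧ Nonempty (F (Fin.last n) ≅ X) ∧
    ∀ i : Fin n, Mono (g i) ∧ P (F i.castSucc) ∧ P (F i.succ) ∧ Q (cokernel (g i))

/-- relative semisimple objects: finite direct sums of relative simples. -/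
def RelSemisimple (P : C → Prop) (X : C) : Prop :=
  ∃ (m : ℕ) (s : Fin m → C), (∀ i, RelSimple P (s i)) ∧ Nonempty (X ≅ ⨁ s)

end CatDefs

section AuxTensor

variable (Λ : Type) [Ring Λ] (M : Type) [AddCommGroup M] [Module Λ M]


variable (X Y Z : Type) [AddCommGroup X] [Module (Module.End Λ M)ᵐᵒᵖ X] [AddCommGroup Y] [Module (Module.End Λ M)ᵐᵒᵖ Y]
  [AddCommGroup Z] [Module (Module.End Λ M)ᵐᵒᵖ Z]

theorem adUnit_apply (x : X) (m : M) :
    adUnit Λ M X x m = Submodule.Quotient.mk (m ⊗ₜ[ℤ] x) := rfl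

theorem adUnit_sub (x y : X) :
    adUnit Λ M X (x - y) = adUnit Λ M X x - adUnit Λ M X y := by
  ext m
  show Submodule.Quotient.mk (m ⊗ₜ[ℤ] (x - y)) = _
  rw [TensorProduct.tmul_sub]
  rfl

theorem tensorOverMap_mk (φ : X →ₗ[(Module.End Λ M)ᵐᵒᵖ] Y) (m : M) (x : X) :
    tensorOverMap Λ M X Y φ (Submodule.Quotient.mk (m ⊗ₜ[ℤ] x)) =
      Submodule.Quotient.mk (m ⊗ₜ[ℤ] φ x) := rfl

theorem tensorOverMap_mkq (φ : X →ₗ[(Module.End Λ M)ᵐᵒᵖ] Y) (t : M ⊗[ℤ] X) :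
    tensorOverMap Λ M X Y φ (Submodule.Quotient.mk t) =
      Submodule.Quotient.mk ((TensorProduct.AlgebraTensorModule.map (LinearMap.id : M →ₗ[Λ] M)
        (φ.toAddMonoidHom.toIntLinearMap)) t) := rfl

theorem adUnit_naturality (φ : X →ₗ[(Module.End Λ M)ᵐᵒᵖ] Y) (x : X) :
    (tensorOverMap Λ M X Y φ).comp (adUnit Λ M X x) = adUnit Λ M Y (φ x) := by
  ext m; rfl

/-- the inner map on `M ⊗[ℤ] X` agrees with `lTensor`. -/
theorem tensorOverMap_inner_eq (φ : X →ₗ[(Module.End Λ M)ᵐᵒᵖ] Y) (t : M ⊗[ℤ] X) :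
    (TensorProduct.AlgebraTensorModule.map (LinearMap.id : M →ₗ[Λ] M)
      (φ.toAddMonoidHom.toIntLinearMap)) t
      = LinearMap.lTensor M (φ.toAddMonoidHom.toIntLinearMap) t := by
  induction t using TensorProduct.induction_on with
  | zero => simp
  | tmul m x => rfl
  | add a b ha hb => rw [map_add, map_add, ha, hb]

theorem tensorOverMap_surjective (φ : X →ₗ[(Module.End Λ M)ᵐᵒᵖ] Y) (hφ : Function.Surjective φ) :
    Function.Surjective (tensorOverMap Λ M X Y φ) := by
  intro u
  obtain ⟨t, rfl⟩ := Submodule.Quotient.mk_surjective _ u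
  have hs : Function.Surjective (LinearMap.lTensor M (φ.toAddMonoidHom.toIntLinearMap)) :=
    LinearMap.lTensor_surjective M hφ
  obtain ⟨s, hs⟩ := hs t
  refine ⟨Submodule.Quotient.mk s, ?_⟩
  rw [tensorOverMap_mkq, tensorOverMap_inner_eq, hs]

theorem tensorOverMap_exact (φ : X →ₗ[(Module.End Λ M)ᵐᵒᵖ] Y) (ψ : Y →ₗ[(Module.End Λ M)ᵐᵒᵖ] Z)
    (hsurj : Function.Surjective ψ) (hex : LinearMap.ker ψ = LinearMap.range φ) :
    LinearMap.ker (tensorOverMap Λ M Y Z ψ) = LinearMap.range (tensorOverMap Λ M X Y φ) := by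
  have hψφ : ∀ x : X, ψ (φ x) = 0 := by
    intro x
    have : φ x ∈ LinearMap.ker ψ := hex ▸ LinearMap.mem_range_self φ x
    exact this
  apply le_antisymm
  · intro u hu
    obtain ⟨t, rfl⟩ := Submodule.Quotient.mk_surjective _ u
    have hu' : (TensorProduct.AlgebraTensorModule.map (LinearMap.id : M →ₗ[Λ] M)
        (ψ.toAddMonoidHom.toIntLinearMap)) t ∈ adRel Λ M Z := by
      exact (Submodule.Quotient.mk_eq_zero (adRel Λ M Z)).1 hu
    -- push the relation back along the surjection
    have hmap : adRel Λ M Z ≤ Submodule.map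
        (TensorProduct.AlgebraTensorModule.map (LinearMap.id : M →ₗ[Λ] M)
          (ψ.toAddMonoidHom.toIntLinearMap)) (adRel Λ M Y) := by
      refine Submodule.span_le.2 ?_
      rintro _ ⟨e, m, z, rfl⟩
      obtain ⟨y, rfl⟩ := hsurj z
      refine ⟨e m ⊗ₜ[ℤ] y - m ⊗ₜ[ℤ] ((MulOpposite.op e) • y),
        Submodule.subset_span ⟨e, m, y, rfl⟩, ?_⟩
      simp only [map_sub, TensorProduct.AlgebraTensorModule.map_tmul, LinearMap.id_apply,
        AddMonoidHom.coe_toIntLinearMap, LinearMap.toAddMonoidHom_coe]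
      rw [map_smul ψ]
    obtain ⟨a, ha, hat⟩ := hmap hu'
    have hker : t - a ∈ LinearMap.ker (LinearMap.lTensor M (ψ.toAddMonoidHom.toIntLinearMap)) := by
      rw [LinearMap.mem_ker, map_sub, ← tensorOverMap_inner_eq, ← tensorOverMap_inner_eq, hat,
        sub_self]
    have hexZ : Function.Exact (φ.toAddMonoidHom.toIntLinearMap)
        (ψ.toAddMonoidHom.toIntLinearMap) := by
      rw [LinearMap.exact_iff]
      ext y
      constructor
      · intro hy
        have : y ∈ LinearMap.ker ψ := hy
        rw [hex] at this
        obtain ⟨x, hx⟩ := this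
        exact ⟨x, hx⟩
      · rintro ⟨x, rfl⟩
        exact hψφ x
    have hkr : LinearMap.ker (LinearMap.lTensor M (ψ.toAddMonoidHom.toIntLinearMap)) =
        LinearMap.range (LinearMap.lTensor M (φ.toAddMonoidHom.toIntLinearMap)) :=
      (lTensor_exact M hexZ hsurj).linearMap_ker_eq
    rw [hkr] at hker
    obtain ⟨s, hs⟩ := hker
    refine ⟨Submodule.Quotient.mk s, ?_⟩
    rw [tensorOverMap_mkq, tensorOverMap_inner_eq, hs]
    refine Eq.symm ((Submodule.Quotient.eq (adRel Λ M Y)).2 ?_)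
    simpa using ha
  · rintro _ ⟨v, rfl⟩
    obtain ⟨s, rfl⟩ := Submodule.Quotient.mk_surjective _ v
    rw [LinearMap.mem_ker, tensorOverMap_mkq, tensorOverMap_mkq]
    refine (Submodule.Quotient.mk_eq_zero (adRel Λ M Z)).2 ?_
    have : (TensorProduct.AlgebraTensorModule.map (LinearMap.id : M →ₗ[Λ] M)
        (ψ.toAddMonoidHom.toIntLinearMap))
        ((TensorProduct.AlgebraTensorModule.map (LinearMap.id : M →ₗ[Λ] M)
          (φ.toAddMonoidHom.toIntLinearMap)) s) = 0 := by
      induction s using TensorProduct.induction_on with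
      | zero => simp
      | tmul m x =>
        simp only [TensorProduct.AlgebraTensorModule.map_tmul, LinearMap.id_apply,
          AddMonoidHom.coe_toIntLinearMap, LinearMap.toAddMonoidHom_coe, hψφ x,
          TensorProduct.tmul_zero]
      | add a b ha hb => rw [map_add, map_add, ha, hb, add_zero]
    rw [this]
    exact Submodule.zero_mem _

end AuxTensor


section AuxFree

variable (Λ : Type) [Ring Λ] (M : Type) [AddCommGroup M] [Module Λ M]

/-- the evaluation bilinear map `M →ₗ[Λ] ((Fin n → Γ) →ₗ[ℤ] (Fin n → M))`. -/
noncomputable def epsBil (n : ℕ) :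
    M →ₗ[Λ] ((Fin n → (Module.End Λ M)ᵐᵒᵖ) →ₗ[ℤ] (Fin n → M)) where
  toFun m :=
    { toFun := fun γ => fun i => (γ i).unop m
      map_add' := by intro γ γ'; funext i; simp
      map_smul' := by intro c γ; funext i; simp }
  map_add' := by intro m m'; ext γ i; simp
  map_smul' := by intro r m; ext γ i; simp

/-- `ε : M ⊗[ℤ] Γ^n →ₗ[Λ] M^n`. -/
noncomputable def epsMap (n : ℕ) :
    (M ⊗[ℤ] (Fin n → (Module.End Λ M)ᵐᵒᵖ)) →ₗ[Λ] (Fin n → M) :=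
  TensorProduct.AlgebraTensorModule.lift (epsBil Λ M n)

theorem epsMap_tmul (n : ℕ) (m : M) (γ : Fin n → (Module.End Λ M)ᵐᵒᵖ) :
    epsMap Λ M n (m ⊗ₜ[ℤ] γ) = fun i => (γ i).unop m := rfl

theorem adRel_le_ker_epsMap (n : ℕ) :
    adRel Λ M (Fin n → (Module.End Λ M)ᵐᵒᵖ) ≤ LinearMap.ker (epsMap Λ M n) := by
  refine Submodule.span_le.2 ?_
  rintro _ ⟨e, m, γ, rfl⟩
  simp only [SetLike.mem_coe, LinearMap.mem_ker, map_sub, epsMap_tmul]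
  rw [sub_eq_zero]
  funext i
  show (γ i).unop (e m) = ((MulOpposite.op e • γ) i).unop m
  simp [smul_eq_mul, MulOpposite.unop_mul, Module.End.mul_apply]

/-- `ε̄ : M ⊗_Γ Γ^n →ₗ[Λ] M^n`. -/
noncomputable def epsBar (n : ℕ) :
    TensorOver Λ M (Fin n → (Module.End Λ M)ᵐᵒᵖ) →ₗ[Λ] (Fin n → M) :=
  Submodule.liftQ _ (epsMap Λ M n) (adRel_le_ker_epsMap Λ M n)

theorem epsBar_mk (n : ℕ) (t : M ⊗[ℤ] (Fin n → (Module.End Λ M)ᵐᵒᵖ)) :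
    epsBar Λ M n (Submodule.Quotient.mk t) = epsMap Λ M n t := rfl

/-- `δ : M^n →ₗ[Λ] M ⊗_Γ Γ^n`. -/
noncomputable def deltaMap (n : ℕ) :
    (Fin n → M) →ₗ[Λ] TensorOver Λ M (Fin n → (Module.End Λ M)ᵐᵒᵖ) :=
  ∑ i : Fin n, (adUnit Λ M (Fin n → (Module.End Λ M)ᵐᵒᵖ)
    (Pi.single i (1 : (Module.End Λ M)ᵐᵒᵖ))).comp (LinearMap.proj i)

theorem deltaMap_apply (n : ℕ) (m : Fin n → M) :
    deltaMap Λ M n m = ∑ i : Fin n,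
      Submodule.Quotient.mk ((m i) ⊗ₜ[ℤ] (Pi.single i (1 : (Module.End Λ M)ᵐᵒᵖ))) := by
  rw [deltaMap, LinearMap.sum_apply]
  rfl

theorem eps_delta (n : ℕ) :
    (epsBar Λ M n).comp (deltaMap Λ M n) = LinearMap.id := by
  refine LinearMap.ext fun m => ?_
  rw [LinearMap.comp_apply, deltaMap_apply, LinearMap.id_apply]
  erw [map_sum]
  funext j
  rw [Finset.sum_apply]
  have : ∀ i : Fin n, epsBar Λ M n (Submodule.Quotient.mk
      ((m i) ⊗ₜ[ℤ] (Pi.single i (1 : (Module.End Λ M)ᵐᵒᵖ)))) j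
      = if j = i then m i else 0 := by
    intro i
    rw [epsBar_mk, epsMap_tmul]
    show ((Pi.single i (1 : (Module.End Λ M)ᵐᵒᵖ) : Fin n → (Module.End Λ M)ᵐᵒᵖ) j).unop (m i)
      = _
    rw [Pi.single_apply]
    by_cases h : j = i <;> simp [h]
  simp only [this]
  simp
  
theorem single_smul_eq (n : ℕ) (i : Fin n) (c : (Module.End Λ M)ᵐᵒᵖ) :
    (MulOpposite.op (c.unop) • Pi.single i (1 : (Module.End Λ M)ᵐᵒᵖ)
      : Fin n → (Module.End Λ M)ᵐᵒᵖ) = Pi.single i c := by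
  funext j
  by_cases h : j = i
  · subst h
    simp [smul_eq_mul]
  · simp [Pi.single_eq_of_ne h, smul_eq_mul]

theorem delta_eps_aux (n : ℕ) (t : M ⊗[ℤ] (Fin n → (Module.End Λ M)ᵐᵒᵖ)) :
    deltaMap Λ M n (epsMap Λ M n t) = Submodule.Quotient.mk t := by
  induction t using TensorProduct.induction_on with
  | zero => simp; rfl
  | add a b ha hb =>
    rw [map_add, map_add, ha, hb]
    rfl
  | tmul m γ =>
    rw [epsMap_tmul, deltaMap_apply]
    have step : ∀ i : Fin n,
        (Submodule.Quotient.mk (((γ i).unop m) ⊗ₜ[ℤ] (Pi.single i (1 : (Module.End Λ M)ᵐᵒᵖ)))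
          : TensorOver Λ M (Fin n → (Module.End Λ M)ᵐᵒᵖ))
        = Submodule.Quotient.mk (m ⊗ₜ[ℤ] (Pi.single i (γ i))) := by
      intro i
      rw [Submodule.Quotient.eq]
      have := single_smul_eq Λ M n i (γ i)
      refine Submodule.subset_span ⟨(γ i).unop, m, Pi.single i (1 : (Module.End Λ M)ᵐᵒᵖ), ?_⟩
      rw [this]
    simp only [step]
    have hsum : (∑ i : Fin n, (Submodule.Quotient.mk (m ⊗ₜ[ℤ] (Pi.single i (γ i)))
        : TensorOver Λ M (Fin n → (Module.End Λ M)ᵐᵒᵖ)))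
        = Submodule.Quotient.mk (∑ i : Fin n, m ⊗ₜ[ℤ] (Pi.single i (γ i))) :=
      (map_sum (Submodule.mkQ _) _ _).symm
    rw [hsum, ← TensorProduct.tmul_sum, Finset.univ_sum_single]

theorem delta_eps (n : ℕ) :
    (deltaMap Λ M n).comp (epsBar Λ M n) = LinearMap.id := by
  ext u
  obtain ⟨t, rfl⟩ := Submodule.Quotient.mk_surjective _ u
  exact delta_eps_aux Λ M n t

/-- `M ⊗_Γ Γ^n ≃ₗ[Λ] M^n`. -/
noncomputable def epsEquiv (n : ℕ) :
    TensorOver Λ M (Fin n → (Module.End Λ M)ᵐᵒᵖ) ≃ₗ[Λ] (Fin n → M) :=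
  LinearEquiv.ofLinear (epsBar Λ M n) (deltaMap Λ M n) (eps_delta Λ M n) (delta_eps Λ M n)

theorem adUnit_pi_bijective (n : ℕ) :
    Function.Bijective (adUnit Λ M (Fin n → (Module.End Λ M)ᵐᵒᵖ)) := by
  set c : (Fin n → (Module.End Λ M)ᵐᵒᵖ) → (M →ₗ[Λ] (Fin n → M)) :=
    fun γ => ((epsEquiv Λ M n).toLinearMap).comp
      (adUnit Λ M (Fin n → (Module.End Λ M)ᵐᵒᵖ) γ) with hc
  have hcval : ∀ γ m, c γ m = fun i => (γ i).unop m := fun γ m => rfl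
  have hcinj : Function.Injective c := by
    intro γ γ' h
    funext i
    apply MulOpposite.unop_injective
    refine LinearMap.ext fun m => ?_
    exact congrFun (LinearMap.congr_fun h m) i
  have hcsurj : Function.Surjective c := by
    intro f
    refine ⟨fun i => MulOpposite.op ((LinearMap.proj i).comp f), ?_⟩
    refine LinearMap.ext fun m => ?_
    funext i
    rfl
  constructor
  · intro γ γ' h
    exact hcinj (by rw [hc]; simp only [h])
  · intro f
    obtain ⟨γ, hγ⟩ := hcsurj (((epsEquiv Λ M n).toLinearMap).comp f)
    refine ⟨γ, LinearMap.ext fun m => ?_⟩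
    apply (epsEquiv Λ M n).injective
    exact LinearMap.congr_fun hγ m

end AuxFree


section AuxAb

open CategoryTheory Limits

variable (Λ : Type) [Ring Λ] (M : Type) [AddCommGroup M] [Module Λ M]

/-- membership of a concrete module in `ab M`. -/
def PmAb (N : Type) [AddCommGroup N] [Module Λ N] : Prop :=
  abSub (ModuleCat.of Λ M) (ModuleCat.of Λ N)

theorem PmAb_self : PmAb Λ M M := fun _ _ hM => hM

theorem PmAb_iso {N N' : Type} [AddCommGroup N] [Module Λ N] [AddCommGroup N'] [Module Λ N']
    (e : N ≃ₗ[Λ] N') (h : PmAb Λ M N) : PmAb Λ M N' :=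
  fun P hP hM => hP.iso e.toModuleIso (h P hP hM)

theorem PmAb_of_subsingleton (N : Type) [AddCommGroup N] [Module Λ N] [Subsingleton N] :
    PmAb Λ M N := by
  intro P hP _
  haveI : Subsingleton (ModuleCat.of Λ N) := ‹Subsingleton N›
  exact hP.zero _ (ModuleCat.isZero_of_subsingleton _)

theorem PmAb_prod {N N' : Type} [AddCommGroup N] [Module Λ N] [AddCommGroup N'] [Module Λ N']
    (h : PmAb Λ M N) (h' : PmAb Λ M N') : PmAb Λ M (N × N') :=
  fun P hP hM => hP.iso (ModuleCat.biprodIsoProd (ModuleCat.of Λ N) (ModuleCat.of Λ N'))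
    (hP.sum (h P hP hM) (h' P hP hM))

theorem PmAb_ker {N N' : Type} [AddCommGroup N] [Module Λ N] [AddCommGroup N'] [Module Λ N']
    (f : N →ₗ[Λ] N') (h : PmAb Λ M N) (h' : PmAb Λ M N') :
    PmAb Λ M (LinearMap.ker f) :=
  fun P hP hM => hP.iso (ModuleCat.kernelIsoKer (ModuleCat.ofHom f))
    (hP.ker (ModuleCat.ofHom f) (h P hP hM) (h' P hP hM))

theorem PmAb_coker {N N' : Type} [AddCommGroup N] [Module Λ N] [AddCommGroup N'] [Module Λ N']
    (f : N →ₗ[Λ] N') (h : PmAb Λ M N) (h' : PmAb Λ M N') :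
    PmAb Λ M (N' ⧸ LinearMap.range f) :=
  fun P hP hM => hP.iso (ModuleCat.cokernelIsoRangeQuotient (ModuleCat.ofHom f))
    (hP.coker (ModuleCat.ofHom f) (h P hP hM) (h' P hP hM))

theorem PmAb_range {N N' : Type} [AddCommGroup N] [Module Λ N] [AddCommGroup N'] [Module Λ N']
    (f : N →ₗ[Λ] N') (h : PmAb Λ M N) (h' : PmAb Λ M N') :
    PmAb Λ M (LinearMap.range f) := by
  have hq : PmAb Λ M (N' ⧸ LinearMap.range f) := PmAb_coker Λ M f h h'
  have hk : PmAb Λ M (LinearMap.ker (Submodule.mkQ (LinearMap.range f))) :=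
    PmAb_ker Λ M (Submodule.mkQ (LinearMap.range f)) h' hq
  exact PmAb_iso Λ M (LinearEquiv.ofEq _ _ (Submodule.ker_mkQ _)) hk

theorem PmAb_pi (h : PmAb Λ M M) (n : ℕ) : PmAb Λ M (Fin n → M) := by
  induction n with
  | zero => exact PmAb_of_subsingleton Λ M _
  | succ n ih =>
    have e : (M × (Fin n → M)) ≃ₗ[Λ] (Fin (n+1) → M) :=
      { toFun := fun p => Fin.cons p.1 p.2
        invFun := fun f => (f 0, fun i => f i.succ)
        map_add' := by intro p q; funext i; induction i using Fin.cases <;> simp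
        map_smul' := by intro c p; funext i; induction i using Fin.cases <;> simp
        left_inv := by intro p; simp
        right_inv := by intro f; funext i; induction i using Fin.cases <;> simp }
    exact PmAb_iso Λ M e (PmAb_prod Λ M h ih)

/-- projectivity of `M` relative to `ab M`, in concrete terms. -/
theorem PmAb_lift (hproj : AbProjective (ModuleCat.of Λ M))
    {A B : Type} [AddCommGroup A] [Module Λ A] [AddCommGroup B] [Module Λ B]
    (hA : PmAb Λ M A) (hB : PmAb Λ M B) (e : A →ₗ[Λ] B) (he : Function.Surjective e)
    (f : M →ₗ[Λ] B) : ∃ g : M →ₗ[Λ] A, e.comp g = f := by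
  obtain ⟨g, hg⟩ := hproj.2 (ModuleCat.of Λ A) (ModuleCat.of Λ B) hA hB
    (ModuleCat.ofHom e) ((ModuleCat.epi_iff_surjective _).2 he) (ModuleCat.ofHom f)
  exact ⟨g.hom, by simpa using congrArg ModuleCat.Hom.hom hg⟩

end AuxAb


section AuxPres

theorem gamma_presentation
    (k : Type) [Field k] (Λ : Type) [Ring Λ] [Algebra k Λ] [FiniteDimensional k Λ]
    (M : Type) [AddCommGroup M] [Module Λ M] [Module.Finite Λ M]
    (X : Type) [AddCommGroup X] [Module (Module.End Λ M)ᵐᵒᵖ X]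
    [Module.Finite (Module.End Λ M)ᵐᵒᵖ X] :
    ∃ (n m : ℕ)
      (f : (Fin m → (Module.End Λ M)ᵐᵒᵖ) →ₗ[(Module.End Λ M)ᵐᵒᵖ]
        (Fin n → (Module.End Λ M)ᵐᵒᵖ))
      (g : (Fin n → (Module.End Λ M)ᵐᵒᵖ) →ₗ[(Module.End Λ M)ᵐᵒᵖ] X),
      Function.Surjective g ∧ LinearMap.ker g = LinearMap.range f := by
  letI : Module k M := Module.compHom M (algebraMap k Λ)
  haveI : IsScalarTower k Λ M := IsScalarTower.of_algebraMap_smul fun r m => rfl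
  haveI : SMulCommClass Λ k M := ⟨fun l c m => by
    show l • (algebraMap k Λ c • m) = algebraMap k Λ c • (l • m)
    rw [← mul_smul, ← mul_smul, Algebra.commutes]⟩
  haveI : SMulCommClass k k M := ⟨fun a b m => by
    show algebraMap k Λ a • (algebraMap k Λ b • m) = algebraMap k Λ b • (algebraMap k Λ a • m)
    rw [← mul_smul, ← mul_smul, ← map_mul, ← map_mul, mul_comm]⟩
  haveI : Module.Finite k M := Module.Finite.trans Λ M
  haveI : FiniteDimensional k (Module.End Λ M) :=
    FiniteDimensional.of_injective (LinearMap.restrictScalarsₗ k Λ M M k)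
      (LinearMap.restrictScalars_injective k)
  haveI : FiniteDimensional k ((Module.End Λ M)ᵐᵒᵖ) :=
    Module.Finite.equiv (MulOpposite.opLinearEquiv k :
      Module.End Λ M ≃ₗ[k] (Module.End Λ M)ᵐᵒᵖ)
  haveI h1 : IsNoetherian k ((Module.End Λ M)ᵐᵒᵖ) := IsNoetherian.iff_fg.2 inferInstance
  haveI : IsNoetherianRing ((Module.End Λ M)ᵐᵒᵖ) :=
    isNoetherianRing_iff.2 (isNoetherian_of_tower k h1)
  obtain ⟨n, g, hg⟩ := Module.Finite.exists_fin' (Module.End Λ M)ᵐᵒᵖ X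
  haveI : Module.Finite (Module.End Λ M)ᵐᵒᵖ ↥(LinearMap.ker g) :=
    Module.Finite.iff_fg.2 (IsNoetherian.noetherian _)
  obtain ⟨m, f₀, hf₀⟩ := Module.Finite.exists_fin' (Module.End Λ M)ᵐᵒᵖ ↥(LinearMap.ker g)
  refine ⟨n, m, (LinearMap.ker g).subtype.comp f₀, g, hg, ?_⟩
  rw [LinearMap.range_comp, LinearMap.range_eq_top.mpr hf₀, Submodule.map_top,
    Submodule.range_subtype]

end AuxPres


section Stmt12
open CategoryTheory Limits

/-- Let `Λ` be a finite-dimensional algebra and `M` an ab-projective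
finite-dimensional `Λ`-module, `Γ = End(M)ᵒᵖ`. Then every finite-dimensional (i.e.
finitely generated) `Γ`-module `X` is `M`-adstatic: the unit
`ν_X : X → Hom_Λ(M, M ⊗_Γ X)` is an isomorphism; that is, `adstat M = mod Γ(M)`. -/
theorem adstat_eq_mod_of_abProjective
    (k : Type) [Field k] (Λ : Type) [Ring Λ] [Algebra k Λ] [FiniteDimensional k Λ]
    (M : Type) [AddCommGroup M] [Module Λ M] [Module.Finite Λ M]
    (hproj : AbProjective (ModuleCat.of Λ M))
    (X : Type) [AddCommGroup X] [Module (Module.End Λ M)ᵐᵒᵖ X]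
    [Module.Finite (Module.End Λ M)ᵐᵒᵖ X] :
    Function.Bijective (adUnit Λ M X) := by
  obtain ⟨n, m, f, g, hg, hker⟩ := gamma_presentation k Λ M X
  have hTgsurj : Function.Surjective (tensorOverMap Λ M _ X g) :=
    tensorOverMap_surjective Λ M _ X g hg
  have hTex : LinearMap.ker (tensorOverMap Λ M _ X g)
      = LinearMap.range (tensorOverMap Λ M _ _ f) :=
    tensorOverMap_exact Λ M _ _ X f g hg hker
  have hM : PmAb Λ M M := PmAb_self Λ M
  have hTm : PmAb Λ M (TensorOver Λ M (Fin m → (Module.End Λ M)ᵐᵒᵖ)) :=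
    PmAb_iso Λ M (epsEquiv Λ M m).symm (PmAb_pi Λ M hM m)
  have hTn : PmAb Λ M (TensorOver Λ M (Fin n → (Module.End Λ M)ᵐᵒᵖ)) :=
    PmAb_iso Λ M (epsEquiv Λ M n).symm (PmAb_pi Λ M hM n)
  have hrange : PmAb Λ M ↥(LinearMap.range (tensorOverMap Λ M _ _ f)) :=
    PmAb_range Λ M _ hTm hTn
  have hTX : PmAb Λ M (TensorOver Λ M X) := by
    have e1 := Submodule.quotEquivOfEq _ _ hTex.symm
    have e2 := (tensorOverMap Λ M _ X g).quotKerEquivOfSurjective hTgsurj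
    exact PmAb_iso Λ M (e1.trans e2) (PmAb_coker Λ M _ hTm hTn)
  constructor
  · -- injectivity
    suffices h0 : ∀ z, adUnit Λ M X z = 0 → z = 0 by
      intro x y hxy
      have hsub : adUnit Λ M X (x - y) = 0 := by rw [adUnit_sub Λ M X, hxy, sub_self]
      exact sub_eq_zero.mp (h0 _ hsub)
    intro z hz
    obtain ⟨γ, rfl⟩ := hg z
    have hcomp : (tensorOverMap Λ M _ X g).comp (adUnit Λ M _ γ) = 0 := by
      rw [adUnit_naturality, hz]
    have hmem : ∀ mm : M, adUnit Λ M _ γ mm ∈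
        LinearMap.range (tensorOverMap Λ M _ _ f) := by
      intro mm
      rw [← hTex]
      have := LinearMap.congr_fun hcomp mm
      simpa [LinearMap.mem_ker] using this
    obtain ⟨u, hu⟩ := PmAb_lift Λ M hproj hTm hrange
      ((tensorOverMap Λ M _ _ f).rangeRestrict)
      (LinearMap.surjective_rangeRestrict _)
      (LinearMap.codRestrict _ (adUnit Λ M _ γ) hmem)
    have huf : (tensorOverMap Λ M _ _ f).comp u = adUnit Λ M _ γ :=
      LinearMap.ext fun mm =>
        congrArg (Submodule.subtype _) (LinearMap.congr_fun hu mm)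
    obtain ⟨β, rfl⟩ := (adUnit_pi_bijective Λ M m).2 u
    rw [adUnit_naturality] at huf
    have hγ : γ = f β := ((adUnit_pi_bijective Λ M n).1 huf.symm)
    rw [hγ]
    have : f β ∈ LinearMap.ker g := hker ▸ LinearMap.mem_range_self f β
    exact this
  · -- surjectivity
    intro h
    obtain ⟨h', hh'⟩ := PmAb_lift Λ M hproj hTn hTX (tensorOverMap Λ M _ X g) hTgsurj h
    obtain ⟨γ, rfl⟩ := (adUnit_pi_bijective Λ M n).2 h'
    exact ⟨g γ, by rw [← adUnit_naturality]; exact hh'⟩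


end Stmt12
end

section
/- Let C be an exact abelian subcategory of mod Λ and C a progenerator of C. Then C is ab-projective, and C = stat C = ab C: the exact abelian subcategory generated by C equals C, and the C-static modules are exactly the objects of C. -/
open TensorProduct LinearMap

open CategoryTheory Limits

section Aux
variable {R : Type} [Ring R] {G : Type} [AddCommGroup G] [Module R G]
variable {N N' : Type} [AddCommGroup N] [Module R N] [AddCommGroup N'] [Module R N']

@[simp] lemma evalTensor_tmul_s13 (g : G) (f : G →ₗ[R] N) :
    evalTensor R G N (g ⊗ₜ[ℤ] f) = f g := rfl

lemma rel_mem (c : G →ₗ[R] G) (m : G) (f : G →ₗ[R] N) :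
    c m ⊗ₜ[ℤ] f - m ⊗ₜ[ℤ] (f ∘ₗ c) ∈ staticRel R G N :=
  AddSubgroup.subset_closure ⟨c, m, f, rfl⟩

/-- postcomposition as a ℤ-linear map on hom groups -/
noncomputable def postcompZ (φ : N →ₗ[R] N') : (G →ₗ[R] N) →ₗ[ℤ] (G →ₗ[R] N') where
  toFun f := φ ∘ₗ f
  map_add' f g := by ext x; simp
  map_smul' z f := by ext x; simp

noncomputable def tmapZ (φ : N →ₗ[R] N') :
    (G ⊗[ℤ] (G →ₗ[R] N)) →ₗ[ℤ] (G ⊗[ℤ] (G →ₗ[R] N')) :=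
  LinearMap.lTensor G (postcompZ φ)

@[simp] lemma tmapZ_tmul (φ : N →ₗ[R] N') (g : G) (f : G →ₗ[R] N) :
    tmapZ φ (g ⊗ₜ[ℤ] f) = g ⊗ₜ[ℤ] (φ ∘ₗ f) := rfl

lemma eval_tmapZ (φ : N →ₗ[R] N') (x : G ⊗[ℤ] (G →ₗ[R] N)) :
    evalTensor R G N' (tmapZ φ x) = φ (evalTensor R G N x) := by
  induction x using TensorProduct.induction_on with
  | zero => simp
  | tmul g f => simp
  | add x y hx hy => simp [map_add, hx, hy]

lemma tmapZ_rel (φ : N →ₗ[R] N') {x : G ⊗[ℤ] (G →ₗ[R] N)} (hx : x ∈ staticRel R G N) :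
    tmapZ φ x ∈ staticRel R G N' := by
  have : staticRel R G N ≤ AddSubgroup.comap (tmapZ (G := G) φ).toAddMonoidHom
      (staticRel R G N') := by
    rw [staticRel, AddSubgroup.closure_le]
    rintro x ⟨c, m, f, rfl⟩
    have h : tmapZ φ (c m ⊗ₜ[ℤ] f - m ⊗ₜ[ℤ] (f ∘ₗ c))
        = c m ⊗ₜ[ℤ] (φ ∘ₗ f) - m ⊗ₜ[ℤ] ((φ ∘ₗ f) ∘ₗ c) := by
      rw [map_sub, tmapZ_tmul, tmapZ_tmul, LinearMap.comp_assoc]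
    exact AddSubgroup.mem_comap.2 (h ▸ rel_mem c m (φ ∘ₗ f))
  exact this hx

end Aux

section LemmaA
variable {R : Type} [Ring R] {G : Type} [AddCommGroup G] [Module R G]

lemma reduce_pi {n : ℕ} (y : G ⊗[ℤ] (G →ₗ[R] (Fin n → G))) :
    y - ∑ i : Fin n, (evalTensor R G (Fin n → G) y i) ⊗ₜ[ℤ]
      (LinearMap.single R (fun _ : Fin n => G) i) ∈ staticRel R G (Fin n → G) := by
  induction y using TensorProduct.induction_on with
  | zero => simpa using zero_mem (staticRel R G (Fin n → G))
  | add x y hx hy =>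
    have : (x + y) - ∑ i : Fin n, (evalTensor R G (Fin n → G) (x + y) i) ⊗ₜ[ℤ]
        (LinearMap.single R (fun _ : Fin n => G) i)
        = (x - ∑ i : Fin n, (evalTensor R G (Fin n → G) x i) ⊗ₜ[ℤ]
            (LinearMap.single R (fun _ : Fin n => G) i))
          + (y - ∑ i : Fin n, (evalTensor R G (Fin n → G) y i) ⊗ₜ[ℤ]
            (LinearMap.single R (fun _ : Fin n => G) i)) := by
      simp only [map_add, Pi.add_apply, TensorProduct.add_tmul, Finset.sum_add_distrib]
      rw [add_sub_add_comm]
    rw [this]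
    exact add_mem hx hy
  | tmul g f =>
    have hmem : ∑ i : Fin n, ((LinearMap.proj i ∘ₗ f) g ⊗ₜ[ℤ]
          LinearMap.single R (fun _ : Fin n => G) i
        - g ⊗ₜ[ℤ] (LinearMap.single R (fun _ : Fin n => G) i ∘ₗ (LinearMap.proj i ∘ₗ f)))
        ∈ staticRel R G (Fin n → G) :=
      sum_mem fun i _ => rel_mem _ g _
    have h2 : (∑ i : Fin n, (LinearMap.single R (fun _ : Fin n => G) i ∘ₗ
        (LinearMap.proj i ∘ₗ f))) = f := by
      ext x
      simp only [LinearMap.sum_apply, LinearMap.coe_comp, Function.comp_apply,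
        LinearMap.proj_apply, LinearMap.single_apply]
      exact congrFun (Finset.univ_sum_single (f x)) _
    have key : g ⊗ₜ[ℤ] f - ∑ i : Fin n, (evalTensor R G (Fin n → G) (g ⊗ₜ[ℤ] f) i) ⊗ₜ[ℤ]
        (LinearMap.single R (fun _ : Fin n => G) i)
        = -∑ i : Fin n, ((LinearMap.proj i ∘ₗ f) g ⊗ₜ[ℤ]
            LinearMap.single R (fun _ : Fin n => G) i
          - g ⊗ₜ[ℤ] (LinearMap.single R (fun _ : Fin n => G) i ∘ₗ (LinearMap.proj i ∘ₗ f))) := by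
      rw [Finset.sum_sub_distrib, neg_sub, ← TensorProduct.tmul_sum, h2]
      rfl
    rw [key]
    exact neg_mem hmem

theorem isStatic_of_presentation {X : Type} [AddCommGroup X] [Module R X] {n m : ℕ}
    (e : (Fin n → G) →ₗ[R] X) (he : Function.Surjective e)
    (u : (Fin m → G) →ₗ[R] (Fin n → G)) (hu : LinearMap.range u = LinearMap.ker e)
    (hlift : ∀ f : G →ₗ[R] X, ∃ g : G →ₗ[R] (Fin n → G), e ∘ₗ g = f) :
    IsStatic R G X := by
  constructor
  · intro x
    obtain ⟨v, rfl⟩ := he x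
    refine ⟨∑ i, v i ⊗ₜ[ℤ] (e ∘ₗ LinearMap.single R (fun _ : Fin n => G) i), ?_⟩
    rw [map_sum]
    simp only [evalTensor_tmul_s13, LinearMap.coe_comp, Function.comp_apply, LinearMap.single_apply]
    rw [← map_sum, Finset.univ_sum_single]
  · intro x hx
    have hpc : Function.Surjective (postcompZ (G := G) e) := fun f => hlift f
    obtain ⟨y, rfl⟩ := LinearMap.lTensor_surjective G hpc x
    set z := evalTensor R G (Fin n → G) y with hzdef
    have hez : e z = 0 := by
      rw [← eval_tmapZ e y] at *; exact hx
    have hzu : z ∈ LinearMap.range u := by rw [hu]; exact hez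
    obtain ⟨w, hw⟩ := hzu
    set A : Fin n → Fin m → (G →ₗ[R] G) :=
      fun i j => LinearMap.proj i ∘ₗ u ∘ₗ LinearMap.single R (fun _ : Fin m => G) j with hA
    set s : Fin n → (G →ₗ[R] (Fin n → G)) := fun i => LinearMap.single R (fun _ : Fin n => G) i
      with hs
    have heu : e ∘ₗ u = 0 := by
      apply LinearMap.ext
      intro v
      have hv : u v ∈ LinearMap.ker e := hu ▸ LinearMap.mem_range_self u v
      simpa using hv
    have hcomp : ∀ j, (∑ i : Fin n, (e ∘ₗ s i) ∘ₗ A i j) = 0 := by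
      intro j
      ext g
      simp only [LinearMap.sum_apply, LinearMap.coe_comp, Function.comp_apply, hA, hs,
        LinearMap.proj_apply, LinearMap.single_apply, LinearMap.zero_apply]
      rw [← map_sum e, Finset.univ_sum_single]
      have := LinearMap.congr_fun heu (Pi.single j g)
      simpa using this
    have hAw : ∀ i, (∑ j : Fin m, A i j (w j)) = z i := by
      intro i
      simp only [hA, LinearMap.coe_comp, Function.comp_apply, LinearMap.proj_apply,
        LinearMap.single_apply]
      rw [← Finset.sum_apply i, ← map_sum u, Finset.univ_sum_single, hw]
    have h1 := reduce_pi (R := R) y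
    have h2 : tmapZ e (y - ∑ i, z i ⊗ₜ[ℤ] s i) ∈ staticRel R G X := tmapZ_rel e h1
    have hr : ∑ i : Fin n, ∑ j : Fin m, (A i j (w j) ⊗ₜ[ℤ] (e ∘ₗ s i)
        - (w j) ⊗ₜ[ℤ] ((e ∘ₗ s i) ∘ₗ A i j)) ∈ staticRel R G X :=
      sum_mem fun i _ => sum_mem fun j _ => rel_mem _ _ _
    have key : (∑ i : Fin n, z i ⊗ₜ[ℤ] (e ∘ₗ s i)) =
        ∑ i : Fin n, ∑ j : Fin m, (A i j (w j) ⊗ₜ[ℤ] (e ∘ₗ s i)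
          - (w j) ⊗ₜ[ℤ] ((e ∘ₗ s i) ∘ₗ A i j)) := by
      have e1 : ∀ i : Fin n, (∑ j : Fin m, A i j (w j) ⊗ₜ[ℤ] (e ∘ₗ s i))
          = z i ⊗ₜ[ℤ] (e ∘ₗ s i) := fun i => by
        rw [← TensorProduct.sum_tmul, hAw]
      have e2 : (∑ j : Fin m, ∑ i : Fin n, (w j) ⊗ₜ[ℤ] ((e ∘ₗ s i) ∘ₗ A i j)) = 0 := by
        refine Finset.sum_eq_zero fun j _ => ?_
        rw [← TensorProduct.tmul_sum, hcomp j, TensorProduct.tmul_zero]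
      calc (∑ i : Fin n, z i ⊗ₜ[ℤ] (e ∘ₗ s i))
          = ∑ i : Fin n, ∑ j : Fin m, A i j (w j) ⊗ₜ[ℤ] (e ∘ₗ s i) := by
            exact (Finset.sum_congr rfl fun i _ => e1 i).symm
        _ = (∑ i : Fin n, ∑ j : Fin m, A i j (w j) ⊗ₜ[ℤ] (e ∘ₗ s i))
            - ∑ j : Fin m, ∑ i : Fin n, (w j) ⊗ₜ[ℤ] ((e ∘ₗ s i) ∘ₗ A i j) := by
            rw [e2, sub_zero]
        _ = (∑ i : Fin n, ∑ j : Fin m, A i j (w j) ⊗ₜ[ℤ] (e ∘ₗ s i))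
            - ∑ i : Fin n, ∑ j : Fin m, (w j) ⊗ₜ[ℤ] ((e ∘ₗ s i) ∘ₗ A i j) := by
            congr 1
            exact Finset.sum_comm
        _ = ∑ i : Fin n, ∑ j : Fin m, (A i j (w j) ⊗ₜ[ℤ] (e ∘ₗ s i)
            - (w j) ⊗ₜ[ℤ] ((e ∘ₗ s i) ∘ₗ A i j)) := by
            rw [← Finset.sum_sub_distrib]
            exact Finset.sum_congr rfl fun i _ => (Finset.sum_sub_distrib ..).symm
    have h3 : tmapZ e (∑ i, z i ⊗ₜ[ℤ] s i) ∈ staticRel R G X := by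
      rw [map_sum]
      simp only [tmapZ_tmul]
      rw [key] at *
      exact hr
    have hsplit : tmapZ e y = tmapZ e (y - ∑ i, z i ⊗ₜ[ℤ] s i)
        + tmapZ e (∑ i, z i ⊗ₜ[ℤ] s i) := by
      rw [← map_add, sub_add_cancel]
    show tmapZ e y ∈ staticRel R G X
    rw [hsplit]
    exact add_mem h2 h3

end LemmaA

section LemmaB

theorem presentation_of_isStatic
    (k : Type) [Field k] (Λ : Type) [Ring Λ] [Algebra k Λ] [FiniteDimensional k Λ]
    (G : Type) [AddCommGroup G] [Module Λ G] [Module.Finite Λ G]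
    (X : Type) [AddCommGroup X] [Module Λ X] [Module.Finite Λ X]
    (hst : IsStatic Λ G X) :
    ∃ (r m : ℕ) (π : (Fin r → G) →ₗ[Λ] X) (u : (Fin m → G) →ₗ[Λ] (Fin r → G)),
      Function.Surjective π ∧ LinearMap.range u = LinearMap.ker π := by
  classical
  letI : Module k G := Module.compHom G (algebraMap k Λ)
  letI : Module k X := Module.compHom X (algebraMap k Λ)
  have hsmG : ∀ (c : k) (g : G), c • g = algebraMap k Λ c • g := fun _ _ => rfl
  have hsmX : ∀ (c : k) (x : X), c • x = algebraMap k Λ c • x := fun _ _ => rfl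
  haveI : IsScalarTower k Λ G := ⟨fun a l g => by
    rw [hsmG, Algebra.smul_def, mul_smul]⟩
  haveI : IsScalarTower k Λ X := ⟨fun a l x => by
    rw [hsmX, Algebra.smul_def, mul_smul]⟩
  haveI : SMulCommClass Λ k G := ⟨fun l a g => by
    rw [hsmG, hsmG, ← mul_smul, ← mul_smul, Algebra.commutes]⟩
  haveI : SMulCommClass Λ k X := ⟨fun l a x => by
    rw [hsmX, hsmX, ← mul_smul, ← mul_smul, Algebra.commutes]⟩
  haveI : Module.Finite k G := Module.Finite.trans Λ G
  haveI : Module.Finite k X := Module.Finite.trans Λ X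
  have finHom : ∀ (Y : Type) (_ : AddCommGroup Y) (_ : Module Λ Y) (_ : Module k Y)
      (_ : IsScalarTower k Λ Y) (_ : SMulCommClass Λ k Y) (_ : Module.Finite k Y),
      FiniteDimensional k (G →ₗ[Λ] Y) := by
    intro Y _ _ _ _ _ _
    let f : (G →ₗ[Λ] Y) →ₗ[k] (G →ₗ[k] Y) :=
      { toFun := fun φ => (φ.restrictScalars k)
        map_add' := fun φ ψ => rfl
        map_smul' := fun c φ => rfl }
    have hinj : Function.Injective f := fun φ ψ hfψ => by
      ext g
      exact congrFun (congrArg (fun (τ : G →ₗ[k] Y) => (τ : G → Y)) hfψ) g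
    exact FiniteDimensional.of_injective f hinj
  haveI hfH : FiniteDimensional k (G →ₗ[Λ] X) := finHom X inferInstance inferInstance inferInstance inferInstance inferInstance inferInstance
  haveI hfE : FiniteDimensional k (G →ₗ[Λ] G) := finHom G inferInstance inferInstance inferInstance inferInstance inferInstance inferInstance
  obtain ⟨hsurj, hker⟩ := hst
  obtain ⟨r, h, hh⟩ := Module.Finite.exists_fin (R := k) (M := G →ₗ[Λ] X)
  -- ρ : E^r → H, a ↦ ∑ hᵢ ∘ aᵢ
  let ρ : (Fin r → (G →ₗ[Λ] G)) →ₗ[k] (G →ₗ[Λ] X) :=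
    { toFun := fun a => ∑ i, h i ∘ₗ a i
      map_add' := fun a b => by
        simp only [Pi.add_apply, LinearMap.comp_add, Finset.sum_add_distrib]
      map_smul' := fun c a => by
        ext g
        rw [RingHom.id_apply]
        show (∑ i, h i ∘ₗ (c • a) i) g = (c • ∑ i, h i ∘ₗ a i) g
        rw [LinearMap.sum_apply, LinearMap.smul_apply, LinearMap.sum_apply, Finset.smul_sum]
        refine Finset.sum_congr rfl fun i _ => ?_
        show h i ((c • a i) g) = c • (h i ∘ₗ a i) g
        rw [LinearMap.smul_apply, hsmG, map_smul, ← hsmX]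
        rfl }
  have hρ : ∀ a g, ρ a g = ∑ i, h i (a i g) := by
    intro a g
    show (∑ i, h i ∘ₗ a i) g = _
    rw [LinearMap.sum_apply]
    exact Finset.sum_congr rfl fun i _ => rfl
  have hρs : Function.Surjective ρ := by
    intro φ
    have hφ : φ ∈ Submodule.span k (Set.range h) := hh ▸ Submodule.mem_top
    rw [Submodule.mem_span_range_iff_exists_fun] at hφ
    obtain ⟨c, hc⟩ := hφ
    refine ⟨fun i => c i • LinearMap.id, ?_⟩
    ext g
    rw [hρ, ← hc, LinearMap.sum_apply]
    refine Finset.sum_congr rfl fun i _ => ?_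
    show h i ((c i • LinearMap.id) g) = (c i • h i) g
    rw [LinearMap.smul_apply, LinearMap.smul_apply, LinearMap.id_apply, hsmG, hsmX, map_smul]
  -- the syzygies
  set W : Submodule k (Fin r → (G →ₗ[Λ] G)) := LinearMap.ker ρ with hWdef
  obtain ⟨m, w, hw⟩ := Module.Finite.exists_fin (R := k) (M := W)
  let σ : (Fin r → (G →ₗ[Λ] G)) → (G →ₗ[Λ] (Fin r → G)) := fun a => LinearMap.pi a
  have hσ : ∀ a g i, σ a g i = a i g := fun a g i => rfl
  have hσsub : ∀ a b (g : G), σ a g - σ b g = σ (a - b) g := by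
    intro a b g; funext i
    rw [Pi.sub_apply, hσ, hσ, hσ, Pi.sub_apply, LinearMap.sub_apply]
  let π : (Fin r → G) →ₗ[Λ] X := ∑ i, h i ∘ₗ LinearMap.proj i
  have hπ : ∀ v, π v = ∑ i, h i (v i) := by
    intro v
    show (∑ i, h i ∘ₗ LinearMap.proj i) v = _
    rw [LinearMap.sum_apply]
    exact Finset.sum_congr rfl fun i _ => rfl
  let u : (Fin m → G) →ₗ[Λ] (Fin r → G) := ∑ j, σ (w j) ∘ₗ LinearMap.proj j
  have hu : ∀ x, u x = ∑ j, σ (w j) (x j) := by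
    intro x
    show (∑ j, σ (w j) ∘ₗ LinearMap.proj j) x = _
    rw [LinearMap.sum_apply]
    exact Finset.sum_congr rfl fun j _ => rfl
  have hWu : ∀ a : Fin r → (G →ₗ[Λ] G), a ∈ W → ∀ g, σ a g ∈ LinearMap.range u := by
    intro a ha g
    have hmem : (⟨a, ha⟩ : W) ∈ Submodule.span k (Set.range w) := hw ▸ Submodule.mem_top
    rw [Submodule.mem_span_range_iff_exists_fun] at hmem
    obtain ⟨c, hc⟩ := hmem
    have hc' : a = ∑ j, c j • (w j : Fin r → (G →ₗ[Λ] G)) := by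
      calc a = ((∑ j, c j • w j : W) : Fin r → (G →ₗ[Λ] G)) := by rw [hc]
        _ = ∑ j, c j • (w j : Fin r → (G →ₗ[Λ] G)) := by
            rw [Submodule.coe_sum]
            exact Finset.sum_congr rfl fun j _ => rfl
    have hexp : σ a g = ∑ j, c j • σ (w j : Fin r → (G →ₗ[Λ] G)) g := by
      funext i
      rw [hσ, hc']
      simp only [Finset.sum_apply, LinearMap.sum_apply, Pi.smul_apply, LinearMap.smul_apply]
      refine Finset.sum_congr rfl fun j _ => ?_
      rw [hσ]
    rw [hexp]
    refine Submodule.sum_mem _ fun j _ => ?_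
    have hrj : σ (w j : Fin r → (G →ₗ[Λ] G)) g ∈ LinearMap.range u :=
      ⟨Pi.single j g, by
        rw [hu, Finset.sum_eq_single j]
        · rw [Pi.single_eq_same]
        · intro b _ hb
          rw [Pi.single_eq_of_ne hb, map_zero]
        · intro hj; exact absurd (Finset.mem_univ j) hj⟩
    exact Submodule.smul_of_tower_mem _ (c j) hrj
  have huπ : LinearMap.range u ≤ LinearMap.ker π := by
    rintro _ ⟨x, rfl⟩
    rw [LinearMap.mem_ker, hu, map_sum]
    refine Finset.sum_eq_zero fun j _ => ?_
    have h1 : π (σ (w j : Fin r → (G →ₗ[Λ] G)) (x j)) = ρ (w j : Fin r → (G →ₗ[Λ] G)) (x j) := by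
      rw [hπ, hρ]
      exact Finset.sum_congr rfl fun i _ => by rw [hσ]
    rw [h1, show ρ (w j : Fin r → (G →ₗ[Λ] G)) = 0 from (w j).2]
    rfl
  have hπs : Function.Surjective π := by
    intro x
    obtain ⟨t, rfl⟩ := hsurj x
    show evalTensor Λ G X t ∈ LinearMap.range π
    induction t using TensorProduct.induction_on with
    | zero => rw [map_zero]; exact Submodule.zero_mem _
    | add s t hs ht => rw [map_add]; exact Submodule.add_mem _ hs ht
    | tmul g φ =>
      obtain ⟨a, rfl⟩ := hρs φ
      refine ⟨σ a g, ?_⟩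
      rw [hπ, evalTensor_tmul_s13, hρ]
      exact Finset.sum_congr rfl fun i _ => by rw [hσ]
  -- a k-linear section of ρ
  obtain ⟨s, hs⟩ := ρ.exists_rightInverse_of_surjective (LinearMap.range_eq_top.2 hρs)
  have hsec : ∀ φ, ρ (s φ) = φ := fun φ => LinearMap.congr_fun hs φ
  -- Φ into the quotient by range u
  let mkQ : (Fin r → G) →ₗ[Λ] ((Fin r → G) ⧸ (LinearMap.range u)) := (LinearMap.range u).mkQ
  have hmk0 : ∀ v, v ∈ LinearMap.range u → mkQ v = 0 := fun v hv =>
    (Submodule.Quotient.mk_eq_zero _).2 hv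
  let B : G →ₗ[ℤ] (G →ₗ[Λ] X) →ₗ[ℤ] ((Fin r → G) ⧸ (LinearMap.range u)) :=
    LinearMap.mk₂ ℤ (fun g φ => mkQ (σ (s φ) g))
      (fun g g' φ => by
        show mkQ (σ (s φ) (g + g')) = mkQ (σ (s φ) g) + mkQ (σ (s φ) g')
        rw [map_add, map_add])
      (fun z g φ => by
        show mkQ (σ (s φ) (z • g)) = z • mkQ (σ (s φ) g)
        rw [map_zsmul, map_zsmul])
      (fun g φ φ' => by
        show mkQ (σ (s (φ + φ')) g) = mkQ (σ (s φ) g) + mkQ (σ (s φ') g)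
        rw [map_add s, show ∀ a b, σ (a + b) = σ a + σ b from fun a b => rfl,
          LinearMap.add_apply, map_add])
      (fun z g φ => by
        show mkQ (σ (s (z • φ)) g) = z • mkQ (σ (s φ) g)
        rw [map_zsmul s, show ∀ (z : ℤ) a, σ (z • a) = z • σ a from fun z a => rfl,
          LinearMap.smul_apply, map_zsmul])
  let Φ := TensorProduct.lift B
  have hΦtmul : ∀ g φ, Φ (g ⊗ₜ[ℤ] φ) = mkQ (σ (s φ) g) := fun g φ => rfl
  have hΦrel : ∀ x ∈ staticRel Λ G X, Φ x = 0 := by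
    intro x hx
    have hle : staticRel Λ G X ≤ AddSubgroup.comap Φ.toAddMonoidHom ⊥ := by
      rw [staticRel, AddSubgroup.closure_le]
      rintro y ⟨c, mm, φ, rfl⟩
      have key : σ (fun i => s φ i ∘ₗ c) mm - σ (s (φ ∘ₗ c)) mm ∈ LinearMap.range u := by
        rw [hσsub]
        refine hWu _ ?_ mm
        rw [hWdef, LinearMap.mem_ker, map_sub, sub_eq_zero, hsec]
        ext g
        rw [hρ]
        show ∑ i, h i (s φ i (c g)) = φ (c g)
        rw [← hρ, hsec]
      have e1 : σ (s φ) (c mm) = σ (fun i => s φ i ∘ₗ c) mm := rfl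
      show Φ (c mm ⊗ₜ[ℤ] φ - mm ⊗ₜ[ℤ] (φ ∘ₗ c)) ∈ (⊥ : AddSubgroup _)
      rw [AddSubgroup.mem_bot, map_sub, hΦtmul, hΦtmul, e1, ← map_sub mkQ, hmk0 _ key]
    have := hle hx
    rwa [AddSubgroup.mem_comap, AddSubgroup.mem_bot] at this
  -- kernel of π is contained in range of u
  have hπu : LinearMap.ker π ≤ LinearMap.range u := by
    intro v hv
    have hy : evalTensor Λ G X (∑ i, v i ⊗ₜ[ℤ] h i) = 0 := by
      rw [map_sum]
      simp only [evalTensor_tmul_s13]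
      rw [← hπ v]
      exact hv
    have hrel := hker _ hy
    have hΦ0 := hΦrel _ hrel
    have hδ : ∀ i, (s (h i) - Pi.single i LinearMap.id) ∈ W := by
      intro i
      rw [hWdef, LinearMap.mem_ker, map_sub, hsec, sub_eq_zero]
      ext g
      rw [hρ, Finset.sum_eq_single i]
      · rw [Pi.single_eq_same]
        rfl
      · intro b _ hb
        rw [Pi.single_eq_of_ne hb]
        show h b ((0 : G →ₗ[Λ] G) g) = 0
        rw [LinearMap.zero_apply, map_zero]
      · intro hi; exact absurd (Finset.mem_univ i) hi
    have hsingle : ∀ i (g : G), σ (Pi.single i LinearMap.id) g = Pi.single i g := by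
      intro i g
      funext j
      rw [hσ]
      by_cases hj : j = i
      · subst hj
        rw [Pi.single_eq_same, Pi.single_eq_same]
        rfl
      · rw [Pi.single_eq_of_ne hj, Pi.single_eq_of_ne hj]
        rfl
    have hΦy : Φ (∑ i, v i ⊗ₜ[ℤ] h i) = mkQ v := by
      rw [map_sum]
      have : ∀ i, Φ (v i ⊗ₜ[ℤ] h i) = mkQ (Pi.single i (v i)) := by
        intro i
        rw [hΦtmul]
        have hd : σ (s (h i)) (v i) - σ (Pi.single i LinearMap.id) (v i)
            ∈ LinearMap.range u := by
          rw [hσsub]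
          exact hWu _ (hδ i) (v i)
        have := hmk0 _ hd
        rw [map_sub] at this
        rw [sub_eq_zero] at this
        rw [this, hsingle]
      rw [Finset.sum_congr rfl fun i _ => this i, ← map_sum]
      congr 1
      exact Finset.univ_sum_single v
    rw [hΦy] at hΦ0
    exact (Submodule.Quotient.mk_eq_zero _).1 hΦ0
  exact ⟨r, m, π, u, hπs, le_antisymm huπ hπu⟩

end LemmaB


section CatHelpers
open CategoryTheory Limits

variable {Λ : Type} [Ring Λ]

lemma abSub_isExact {C : Type*} [Category C] [Abelian C] (M : C) :
    IsExactAbelianSub (abSub M) where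
  iso := fun e h => fun Q hQ hM => hQ.iso e (h Q hQ hM)
  zero := fun Z hZ => fun Q hQ _ => hQ.zero Z hZ
  ker := fun f hX hY => fun Q hQ hM => hQ.ker f (hX Q hQ hM) (hY Q hQ hM)
  coker := fun f hX hY => fun Q hQ hM => hQ.coker f (hX Q hQ hM) (hY Q hQ hM)
  sum := fun hX hY => fun Q hQ hM => hQ.sum (hX Q hQ hM) (hY Q hQ hM)

lemma abSub_self {C : Type*} [Category C] [Abelian C] (M : C) : abSub M M :=
  fun _ _ hM => hM

noncomputable def piSuccEquiv (n : ℕ) (G : Type) [AddCommGroup G] [Module Λ G] :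
    (Fin (n+1) → G) ≃ₗ[Λ] G × (Fin n → G) :=
  { (Fin.consEquiv (fun _ : Fin (n+1) => G)).symm with map_add' := fun _ _ => rfl, map_smul' := fun _ _ => rfl }

lemma exactSub_pi {Q : ModuleCat.{0} Λ → Prop} (hQ : IsExactAbelianSub Q) {G : ModuleCat.{0} Λ}
    (hQG : Q G) : ∀ n : ℕ, Q (ModuleCat.of Λ (Fin n → ↥G))
  | 0 => hQ.zero _ (ModuleCat.isZero_of_subsingleton _)
  | (n+1) => by
    have h1 : Q (G ⊞ ModuleCat.of Λ (Fin n → ↥G)) := hQ.sum hQG (exactSub_pi hQ hQG n)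
    have h2 : Q (ModuleCat.of Λ (↥G × (Fin n → ↥G))) :=
      hQ.iso (ModuleCat.biprodIsoProd _ _) h1
    exact hQ.iso ((piSuccEquiv n ↥G).symm.toModuleIso) h2

lemma exactSub_biproduct {Q : ModuleCat.{0} Λ → Prop} (hQ : IsExactAbelianSub Q)
    {G : ModuleCat.{0} Λ} (hQG : Q G) (n : ℕ) : Q (⨁ (fun _ : Fin n => G)) :=
  hQ.iso (ModuleCat.biproductIsoPi _).symm (exactSub_pi hQ hQG n)

lemma ofPresentation {Q : ModuleCat.{0} Λ → Prop} (hQ : IsExactAbelianSub Q) {G : ModuleCat.{0} Λ}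
    (hQG : Q G) (X : ModuleCat.{0} Λ) {r m : ℕ}
    (π : (Fin r → ↥G) →ₗ[Λ] ↥X) (u : (Fin m → ↥G) →ₗ[Λ] (Fin r → ↥G))
    (hπs : Function.Surjective π) (hu : LinearMap.range u = LinearMap.ker π) :
    Q X := by
  let u' : ModuleCat.of Λ (Fin m → ↥G) ⟶ ModuleCat.of Λ (Fin r → ↥G) := ModuleCat.ofHom u
  have h1 : Q (cokernel u') := hQ.coker u' (exactSub_pi hQ hQG m) (exactSub_pi hQ hQG r)
  have e2 : ((Fin r → ↥G) ⧸ LinearMap.range u'.hom) ≃ₗ[Λ] ↥X :=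
    (Submodule.quotEquivOfEq _ _ hu).trans (π.quotKerEquivOfSurjective hπs)
  exact hQ.iso (ModuleCat.cokernelIsoRangeQuotient u' ≪≫ e2.toModuleIso) h1

lemma presentationOfP {P : ModuleCat.{0} Λ → Prop} (hP : IsExactAbelianSub P)
    {G : ModuleCat.{0} Λ} (hG : ProjIn P G)
    (hgen : ∀ X : ModuleCat.{0} Λ, P X →
      ∃ (n : ℕ) (e : (⨁ (fun _ : Fin n => G)) ⟶ X), Epi e)
    (X : ModuleCat.{0} Λ) (hX : P X) :
    ∃ (n m : ℕ) (e : (Fin n → ↥G) →ₗ[Λ] ↥X) (u : (Fin m → ↥G) →ₗ[Λ] (Fin n → ↥G)),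
      Function.Surjective e ∧ LinearMap.range u = LinearMap.ker e ∧
      (∀ f : ↥G →ₗ[Λ] ↥X, ∃ g : ↥G →ₗ[Λ] (Fin n → ↥G), e ∘ₗ g = f) := by
  obtain ⟨n, e0, he0⟩ := hgen X hX
  haveI := he0
  let eb : ModuleCat.of Λ (Fin n → ↥G) ⟶ X :=
    (ModuleCat.biproductIsoPi (fun _ : Fin n => G)).inv ≫ e0
  haveI : Epi eb := epi_comp _ _
  have hebs : Function.Surjective eb := (ModuleCat.epi_iff_surjective eb).1 inferInstance
  have hPpi : P (ModuleCat.of Λ (Fin n → ↥G)) := exactSub_pi hP hG.1 n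
  have hPker : P (kernel eb) := hP.ker eb hPpi hX
  have hPkerof : P (ModuleCat.of Λ (LinearMap.ker eb.hom)) :=
    hP.iso (ModuleCat.kernelIsoKer eb) hPker
  obtain ⟨m, e1, he1⟩ := hgen _ hPkerof
  haveI := he1
  let w : ModuleCat.of Λ (Fin m → ↥G) ⟶ ModuleCat.of Λ (LinearMap.ker eb.hom) :=
    (ModuleCat.biproductIsoPi (fun _ : Fin m => G)).inv ≫ e1
  haveI : Epi w := epi_comp _ _
  have hws : Function.Surjective w := (ModuleCat.epi_iff_surjective w).1 inferInstance
  refine ⟨n, m, eb.hom, (LinearMap.ker eb.hom).subtype ∘ₗ w.hom, hebs, ?_, ?_⟩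
  · rw [LinearMap.range_comp, LinearMap.range_eq_top.2 hws, Submodule.map_subtype_top]
  · intro f
    obtain ⟨g, hg⟩ := hG.2 _ X hPpi hX eb inferInstance (ModuleCat.ofHom f)
    refine ⟨g.hom, ?_⟩
    exact congrArg ModuleCat.Hom.hom hg

end CatHelpers

section Stmt13
open CategoryTheory Limits

/-- Let `P` be an exact abelian subcategory of `mod Λ` and `G` a
progenerator of `P` (a projective object such that every object of `P` is an epimorphic
image of a finite direct sum of copies of `G`). Then `G` is ab-projective, `P = ab G`,
and `P = stat G`: the `G`-static modules are exactly the objects of `P`. -/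
theorem progenerator_abProjective_stat_eq_ab
    (k : Type) [Field k] (Λ : Type) [Ring Λ] [Algebra k Λ] [FiniteDimensional k Λ]
    (P : ModuleCat Λ → Prop) (hP : IsExactAbelianSub P)
    (hPfin : ∀ X : ModuleCat Λ, P X → Module.Finite Λ X)
    (G : ModuleCat Λ) (hG : ProjIn P G)
    (hgen : ∀ X : ModuleCat Λ, P X →
      ∃ (n : ℕ) (e : (⨁ (fun _ : Fin n => G)) ⟶ X), Epi e) :
    AbProjective G ∧
    (∀ X : ModuleCat Λ, P X ↔ abSub G X) ∧
    (∀ X : ModuleCat Λ, Module.Finite Λ X → (P X ↔ IsStatic Λ ↥G ↥X)) := by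
  have habP : ∀ X : ModuleCat Λ, abSub G X → P X := fun X hX => hX P hP hG.1
  have hpres := presentationOfP hP hG hgen
  refine ⟨⟨abSub_self G, fun X Y hX hY e he f => hG.2 X Y (habP X hX) (habP Y hY) e he f⟩,
    ?_, ?_⟩
  · intro X
    constructor
    · intro hX Q hQ hQG
      obtain ⟨n, m, eb, u, hs, hr, _⟩ := hpres X hX
      exact ofPresentation hQ hQG X eb u hs hr
    · exact habP X
  · intro X hXfin
    constructor
    · intro hX
      obtain ⟨n, m, eb, u, hs, hr, h1⟩ := hpres X hX
      exact isStatic_of_presentation eb hs u hr h1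
    · intro hstat
      haveI : Module.Finite Λ ↥G := hPfin G hG.1
      haveI : Module.Finite Λ ↥X := hXfin
      obtain ⟨r, m, pp, u, hps, hu⟩ := presentation_of_isStatic k Λ ↥G ↥X hstat
      exact ofPresentation hP hG.1 X pp u hps hu


end Stmt13
end
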